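/- Let G be a balanced bipartite graph with parts X, Y and S ⊆ X. Let C = x_1 y_1 ⋯ x_m y_m x_1 be a cycle of G with x_i ∈ X, |C| = 2m ≥ 6, and |S ∩ V(C)| ≥ 2, such that G contains no feasible cycle shorter than C (i.e., C is a minimal system). Then for any vertex y ∈ Y \ V(C), the number of neighbors of y on C is at most |C|/2 − 1. -/

import Mathlib

open SimpleGraph Walk

section Helpers

variable {V : Type*} {G : SimpleGraph V} {X Y : Finset V}

private lemma side_alt (hdisj : Disjoint X Y)
    (hbip : ∀ u v : V, G.Adj u v → (u ∈ X ∧ v ∈ Y) ∨ (u ∈ Y ∧ v ∈ X))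
    {u w : V} (h : G.Adj u w) : (u ∈ X ↔ w ∉ X) := by
  rcases hbip u w h with ⟨hu, hw⟩ | ⟨hu, hw⟩
  · exact iff_of_true hu (fun hwX => Finset.disjoint_left.mp hdisj hwX hw)
  · exact iff_of_false (fun huX => Finset.disjoint_left.mp hdisj huX hu) (not_not_intro hw)

private lemma countP_X [DecidableEq V] (hdisj : Disjoint X Y)
    (hbip : ∀ u v : V, G.Adj u v → (u ∈ X ∧ v ∈ Y) ∨ (u ∈ Y ∧ v ∈ X))
    {a b : V} (p : G.Walk a b) :
    p.support.countP (fun u => decide (u ∈ X)) = (p.length + if a ∈ X then 2 else 1) / 2 := by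
  induction p with
  | nil =>
    rename_i u
    rw [support_nil]
    by_cases h : u ∈ X <;> simp [h]
  | @cons a c b h q ih =>
    have hac := side_alt hdisj hbip h
    rw [support_cons, List.countP_cons, ih, length_cons]
    by_cases ha : a ∈ X
    · have hc : c ∉ X := hac.mp ha
      simp only [ha, hc, if_true, if_false, decide_eq_true_eq]
      omega
    · have hc : c ∈ X := by by_contra hc; exact ha (hac.mpr hc)
      simp only [ha, hc, if_true, if_false, decide_eq_true_eq]
      omega

private lemma walk_parity (hdisj : Disjoint X Y)
    (hbip : ∀ u v : V, G.Adj u v → (u ∈ X ∧ v ∈ Y) ∨ (u ∈ Y ∧ v ∈ X))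
    {a b : V} (p : G.Walk a b) : ((a ∈ X) ↔ (b ∈ X)) ↔ Even p.length := by
  induction p with
  | nil => simp
  | @cons a c b h q ih =>
    have hac := side_alt hdisj hbip h
    rw [length_cons, Nat.even_add_one, ← ih]
    tauto

private lemma closed_mem_tail {u : V} {w : G.Walk u u} (hw : ¬w.Nil) (s : V) :
    s ∈ w.support ↔ s ∈ w.support.tail := by
  cases w with
  | nil => simp at hw
  | cons h q =>
    rw [support_cons]
    simp only [List.tail_cons, List.mem_cons]
    constructor
    · rintro (rfl | h')
      · exact q.end_mem_support
      · exact h'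
    · exact Or.inr

private lemma pieces_isPath [DecidableEq V] {a b : V}
    {c0 : G.Walk a a} (hc : c0.IsCycle) (hb : b ∈ c0.support) (hab : a ≠ b) :
    (c0.takeUntil b hb).IsPath ∧ (c0.dropUntil b hb).IsPath := by
  have hspec := c0.take_spec hb
  have hsupp : c0.support =
      (c0.takeUntil b hb).support ++ (c0.dropUntil b hb).support.tail := by
    conv_lhs => rw [← hspec]
    exact support_append _ _
  have htail : c0.support.tail =
      (c0.takeUntil b hb).support.tail ++ (c0.dropUntil b hb).support.tail := by
    rw [hsupp, (c0.takeUntil b hb).support_eq_cons]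
    rfl
  have hnd : c0.support.tail.Nodup := hc.support_nodup
  rw [htail, List.nodup_append] at hnd
  obtain ⟨hnd1, hnd2, hdisj2⟩ := hnd
  have haD : a ∈ (c0.dropUntil b hb).support.tail :=
    end_mem_tail_support_of_ne (Ne.symm hab) _
  have hbT : b ∈ (c0.takeUntil b hb).support.tail :=
    end_mem_tail_support_of_ne hab _
  constructor
  · apply IsPath.mk'
    rw [(c0.takeUntil b hb).support_eq_cons, List.nodup_cons]
    exact ⟨fun ha => hdisj2 a ha a haD rfl, hnd1⟩
  · apply IsPath.mk'
    rw [(c0.dropUntil b hb).support_eq_cons, List.nodup_cons]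
    exact ⟨fun hbm => hdisj2 b hbT b hbm rfl, hnd2⟩

private lemma mk_cycle {a b y : V} (p : G.Walk a b)
    (hp : p.IsPath) (hy : y ∉ p.support) (hya : G.Adj y a) (hyb : G.Adj y b) (hab : a ≠ b) :
    ∃ w : G.Walk y y, w.IsCycle ∧ w.length = p.length + 2 ∧
      a ∈ w.support ∧ b ∈ w.support := by
  set r : G.Walk a y := p.append (Walk.cons hyb.symm Walk.nil) with hr
  have hrsupp : r.support = p.support ++ [y] := by
    rw [hr, support_append]
    rfl
  have hrpath : r.IsPath := by
    apply IsPath.mk'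
    rw [hrsupp]
    simp only [List.nodup_append, List.nodup_cons, List.not_mem_nil, List.nodup_nil,
      List.disjoint_singleton]
    exact ⟨hp.support_nodup, by simp, by simp; intro x hx h; rw [h] at hx; exact hy hx⟩
  have hredges : r.edges = p.edges ++ [s(b, y)] := by
    rw [hr, edges_append]
    rfl
  refine ⟨Walk.cons hya r, ?_, ?_, ?_, ?_⟩
  · rw [cons_isCycle_iff]
    refine ⟨hrpath, ?_⟩
    rw [hredges]
    intro hmem
    rcases List.mem_append.mp hmem with hmem | hmem
    · exact hy (p.fst_mem_support_of_mem_edges hmem)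
    · simp only [List.mem_singleton, Sym2.eq_iff] at hmem
      rcases hmem with ⟨rfl, rfl⟩ | ⟨-, rfl⟩
      · exact hya.ne rfl
      · exact hab rfl
  · rw [length_cons, hr, length_append]
    rfl
  · rw [support_cons, hrsupp]
    simp [p.start_mem_support]
  · rw [support_cons, hrsupp]
    simp [p.end_mem_support]

end Helpers

/-- Lemma 1(2): for a minimal feasible cycle C of length ≥ 6 in a bipartite
graph and a vertex y ∈ Y off C, we have d_C(y) ≤ |C|/2 - 1. -/
theorem deg_on_minimal_cycle {V : Type*} [Fintype V] [DecidableEq V]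
    (G : SimpleGraph V) [DecidableRel G.Adj]
    (X Y S : Finset V)
    (hdisj : Disjoint X Y) (hcover : X ∪ Y = Finset.univ)
    (hbip : ∀ u v : V, G.Adj u v → (u ∈ X ∧ v ∈ Y) ∨ (u ∈ Y ∧ v ∈ X))
    (hSX : S ⊆ X)
    (v : V) (c : G.Walk v v) (hc : c.IsCycle)
    (hlen : 6 ≤ c.length)
    (hfeas : 2 ≤ (S ∩ c.support.toFinset).card)
    (hmin : ∀ (u : V) (c' : G.Walk u u), c'.IsCycle →
      2 ≤ (S ∩ c'.support.toFinset).card → c.length ≤ c'.length)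
    (y : V) (hy : y ∈ Y) (hyc : y ∉ c.support) :
    (c.support.toFinset.filter (fun u => G.Adj y u)).card ≤ c.length / 2 - 1 := by
  classical
  have heven : Even c.length := (walk_parity hdisj hbip c).mp Iff.rfl
  obtain ⟨k, hk⟩ := heven
  -- two distinct S-vertices on C
  obtain ⟨xa, hxa, xb, hxb, hne⟩ := Finset.one_lt_card.mp hfeas
  rw [Finset.mem_inter, List.mem_toFinset] at hxa hxb
  obtain ⟨hxaS, hxaC⟩ := hxa
  obtain ⟨hxbS, hxbC⟩ := hxb
  -- y's neighbors lie in X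
  have hnbrX : ∀ u, G.Adj y u → u ∈ X := by
    intro u h
    rcases hbip y u h with ⟨h1, _⟩ | ⟨_, h2⟩
    · exact absurd h1 (Finset.disjoint_right.mp hdisj hy)
    · exact h2
  -- key claim: y is not adjacent to both xa and xb
  have hkey : ¬(G.Adj y xa ∧ G.Adj y xb) := by
    rintro ⟨hyxa, hyxb⟩
    have hnenil : ¬c.Nil := hc.not_nil
    set c' := c.rotate xa hxaC with hc'def
    have hc' : c'.IsCycle := hc.rotate hxaC
    have hlenrot : c'.length = c.length := by
      have := congrArg Walk.length ((c.take_spec hxaC).symm)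
      rw [length_append] at this
      have h2 : c'.length =
          (c.dropUntil xa hxaC).length + (c.takeUntil xa hxaC).length := by
        simp only [hc'def, Walk.rotate, length_append]
      omega
    have hrotmem : ∀ s, s ∈ c'.support ↔ s ∈ c.support := by
      intro s
      rw [closed_mem_tail hc'.not_nil, closed_mem_tail hnenil,
        (support_rotate c xa hxaC).perm.mem_iff]
    have hxbC' : xb ∈ c'.support := (hrotmem xb).mpr hxbC
    have hyc' : y ∉ c'.support := fun h => hyc ((hrotmem y).mp h)
    obtain ⟨hTpath, hDpath⟩ := pieces_isPath hc' hxbC' hne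
    set T := c'.takeUntil xb hxbC' with hT
    set D := c'.dropUntil xb hxbC' with hD
    have hTD : T.length + D.length = c.length := by
      have h3 := congrArg Walk.length (c'.take_spec hxbC')
      rw [length_append] at h3
      rw [hT, hD]
      omega
    have hyT : y ∉ T.support := fun h => hyc' (support_takeUntil_subset _ _ h)
    have hyD : y ∉ D.support := fun h => hyc' (support_dropUntil_subset _ _ h)
    -- build the short cycle
    have hshort : ∃ w : G.Walk y y, w.IsCycle ∧ w.length ≤ c.length / 2 + 2 ∧
        xa ∈ w.support ∧ xb ∈ w.support := by
      by_cases hTlen : T.length ≤ c.length / 2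
      · obtain ⟨w, hw1, hw2, hw3, hw4⟩ := mk_cycle T hTpath hyT hyxa hyxb hne
        exact ⟨w, hw1, by omega, hw3, hw4⟩
      · obtain ⟨w, hw1, hw2, hw3, hw4⟩ := mk_cycle D hDpath hyD hyxb hyxa (Ne.symm hne)
        exact ⟨w, hw1, by omega, hw4, hw3⟩
    obtain ⟨w, hwcyc, hwlen, hwa, hwb⟩ := hshort
    have hwfeas : 2 ≤ (S ∩ w.support.toFinset).card := by
      have hsub : ({xa, xb} : Finset V) ⊆ S ∩ w.support.toFinset := by
        intro z hz
        rcases Finset.mem_insert.mp hz with rfl | hz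
        · exact Finset.mem_inter.mpr ⟨hxaS, List.mem_toFinset.mpr hwa⟩
        · rw [Finset.mem_singleton] at hz
          subst hz
          exact Finset.mem_inter.mpr ⟨hxbS, List.mem_toFinset.mpr hwb⟩
      calc 2 = ({xa, xb} : Finset V).card := (Finset.card_pair hne).symm
        _ ≤ _ := Finset.card_le_card hsub
    have := hmin y w hwcyc hwfeas
    omega
  -- pick z ∈ S on C not adjacent to y
  obtain ⟨z, hzS, hzC, hzadj⟩ : ∃ z, z ∈ S ∧ z ∈ c.support ∧ ¬G.Adj y z := by
    by_cases h : G.Adj y xa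
    · exact ⟨xb, hxbS, hxbC, fun h' => hkey ⟨h, h'⟩⟩
    · exact ⟨xa, hxaS, hxaC, h⟩
  -- count X-vertices on C
  have hcard : (c.support.toFinset.filter (fun u => u ∈ X)).card = c.length / 2 := by
    have htfeq : c.support.toFinset = c.support.tail.toFinset := by
      ext s
      rw [List.mem_toFinset, List.mem_toFinset, closed_mem_tail hc.not_nil]
    have hcount := countP_X hdisj hbip c
    have hcons : c.support.countP (fun u => decide (u ∈ X)) =
        (if v ∈ X then 1 else 0) + c.support.tail.countP (fun u => decide (u ∈ X)) := by
      conv_lhs => rw [c.support_eq_cons]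
      rw [List.countP_cons]
      by_cases hv : v ∈ X <;> simp [hv] <;> omega
    have hfeq : c.support.tail.toFinset.filter (fun u => u ∈ X) =
        (c.support.tail.filter (fun u => decide (u ∈ X))).toFinset := by
      ext s
      simp [List.mem_filter]
    have hfilt : (c.support.tail.toFinset.filter (fun u => u ∈ X)).card =
        c.support.tail.countP (fun u => decide (u ∈ X)) := by
      rw [hfeq, List.toFinset_card_of_nodup (hc.support_nodup.filter _),
        List.countP_eq_length_filter]
    rw [htfeq, hfilt]
    by_cases hv : v ∈ X <;> simp [hv] at hcount hcons <;> omega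
  -- final bound
  have hsub : c.support.toFinset.filter (fun u => G.Adj y u) ⊆
      (c.support.toFinset.filter (fun u => u ∈ X)).erase z := by
    intro u hu
    rw [Finset.mem_filter] at hu
    refine Finset.mem_erase.mpr ⟨?_, Finset.mem_filter.mpr ⟨hu.1, hnbrX u hu.2⟩⟩
    rintro rfl
    exact hzadj hu.2
  calc (c.support.toFinset.filter (fun u => G.Adj y u)).card
      ≤ ((c.support.toFinset.filter (fun u => u ∈ X)).erase z).card :=
        Finset.card_le_card hsub
    _ = (c.support.toFinset.filter (fun u => u ∈ X)).card - 1 :=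
        Finset.card_erase_of_mem (Finset.mem_filter.mpr
          ⟨List.mem_toFinset.mpr hzC, hSX hzS⟩)
    _ ≤ c.length / 2 - 1 := by omega
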